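/- Let k be a positive integer. The relation ≺ on P_k (p' ≺ p iff p' is an admissible prefix of p) is a partial order: it is reflexive, antisymmetric and transitive. Moreover, for all p, p' ∈ P_k, p' ≺ p implies p' ≤ p in the geodesic order. -/

import Mathlib

open Sum
open scoped Classical

noncomputable section

namespace PartitionPaper

variable {X : Type*}

/-- The number of blocks of a partition of `X`, encoded as a setoid on `X`. -/
def nc (p : Setoid X) : ℕ := Nat.card (Quotient p)

/-- The geodesic distance `d(p,p') = (nc p + nc p')/2 - nc (p ⊔ p')`. -/
def pdist (p q : Setoid X) : ℚ :=
  ((nc p : ℚ) + (nc q : ℚ)) / 2 - (nc (p ⊔ q) : ℚ)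

/-- Geodesic order with base partition `b` : `p' ≤_b p`. -/
def geoLE (b p' p : Setoid X) : Prop := pdist b p' + pdist p' p = pdist b p

/-- Coarser-compatible order `p' ⊣_b p` : `p'` coarser than `p` and
`nc (p' ⊔ b) = nc (p ⊔ b)`.  (In the setoid lattice, `p ≤ p'` means `p` is finer.) -/
def coarserComp (b p' p : Setoid X) : Prop :=
  p ≤ p' ∧ nc (p' ⊔ b) = nc (p ⊔ b)

/-- Finer-compatible order `p' ⊐_b p` : `p'` finer than `p` and
`nc p' - nc (p' ⊔ b) = nc p - nc (p ⊔ b)`. -/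
def finerComp (b p' p : Setoid X) : Prop :=
  p' ≤ p ∧ (nc p' : ℤ) - (nc (p' ⊔ b) : ℤ) = (nc p : ℤ) - (nc (p ⊔ b) : ℤ)

/-- `p'` is obtained from `p` by gluing two blocks of `p` into one. -/
def IsGluing (p p' : Setoid X) : Prop := p ≤ p' ∧ nc p' + 1 = nc p

/-- The Cayley graph on partitions of `X`: an edge iff one partition is obtained
from the other by gluing two of its blocks into one. -/
def glueGraph (X : Type*) : SimpleGraph (Setoid X) where
  Adj p q := IsGluing p q ∨ IsGluing q p
  symm := ⟨fun _ _ h => h.elim Or.inr Or.inl⟩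
  loopless := ⟨by
    intro p h
    rcases h with ⟨-, h⟩ | ⟨-, h⟩ <;> omega⟩

/-- The segment `[p₁, p₂]` for the geodesic distance. -/
def seg (p₁ p₂ : Setoid X) : Set (Setoid X) :=
  {p | pdist p₁ p + pdist p p₂ = pdist p₁ p₂}

/-- The defect of `p'` from being on `[b, p]`. -/
def df (b p' p : Setoid X) : ℚ := pdist b p' + pdist p' p - pdist b p

/-- Admissible one-step splits: `p'` is obtained by cutting a (pivotal) block of `p`
into two blocks in such a way that the join with `b` gains one block. -/
def Delta (b p : Setoid X) : Set (Setoid X) :=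
  {p' | p' ≤ p ∧ nc p' = nc p + 1 ∧ nc (p' ⊔ b) = nc (p ⊔ b) + 1}

/-- The admissible splits `Sp_b(p) = ⋃ₘ Δ_b^m(p)`. -/
def Sp (b p : Setoid X) : Set (Setoid X) :=
  {p' | Relation.ReflTransGen (fun u v => v ∈ Delta b u) p p'}

/-- The admissible gluings `Gl_b(p)`: partitions obtained by gluing blocks of `p`
without altering the number of blocks of the join with `b`. -/
def Gl (b p : Setoid X) : Set (Setoid X) :=
  {p' | p ≤ p' ∧ nc (p' ⊔ b) = nc (p ⊔ b)}

/-- `p'` is directly smaller than `p` for the relation `r`. -/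
def DirectlySmaller (r : Setoid X → Setoid X → Prop) (p' p : Setoid X) : Prop :=
  r p' p ∧ p' ≠ p ∧ ¬ ∃ p'', p'' ≠ p ∧ p'' ≠ p' ∧ r p' p'' ∧ r p'' p

/-- The block of the partition `p` corresponding to a class `c`. -/
def blockSet (p : Setoid X) (c : Quotient p) : Set X := {x | Quotient.mk p x = c}

/-- The number of blocks of `q` contained in the block `c` of `p`. -/
def numSubBlocks (q p : Setoid X) (c : Quotient p) : ℕ :=
  Nat.card {d : Quotient q // blockSet q d ⊆ blockSet p c}

/-- The number of blocks of `p` containing exactly `i` blocks of `q`. -/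
def rcount (q p : Setoid X) (i : ℕ) : ℕ :=
  Nat.card {c : Quotient p // numSubBlocks q p c = i}

/-- The Möbius function of the refinement order:
`μ_f(q,p) = (-1)^(nc q - nc p) ∏_i ((i-1)!)^(r_i)` for `q` finer than `p`. -/
def muf (q p : Setoid X) : ℤ :=
  (-1) ^ (nc q - nc p) *
    ∏ i ∈ Finset.range (nc q + 1), ((Nat.factorial (i - 1) : ℤ)) ^ (rcount q p i)

/-- `P_k`: partitions of `{1,…,k} ∪ {1',…,k'}`, the left summand being the
unprimed (top) row and the right summand the primed (bottom) row. -/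
abbrev Pk (k : ℕ) := Setoid (Fin k ⊕ Fin k)

/-- The identity partition `id_k = {{i, i'} : 1 ≤ i ≤ k}`. -/
def idk (k : ℕ) : Pk k := Setoid.ker (Sum.elim id id)

/-- The permutation partition associated with `σ`, with blocks `{i, σ(i)'}`. -/
def permPartition {k : ℕ} (σ : Equiv.Perm (Fin k)) : Pk k :=
  Setoid.ker (Sum.elim id σ.symm)

/-- `S_k`, the set of permutation partitions. -/
def Sk (k : ℕ) : Set (Pk k) := Set.range (permPartition (k := k))

/-- `B_k`, the set of Brauer partitions: all blocks have exactly two elements. -/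
def Bk (k : ℕ) : Set (Pk k) := {p | ∀ x, Nat.card {y | p.r x y} = 2}

/-- Embedding of the top/bottom rows of the upper diagram `q` into the
three-row diagram (top ⊕ (middle ⊕ bottom)). -/
def upMap (k : ℕ) : Fin k ⊕ Fin k → Fin k ⊕ (Fin k ⊕ Fin k) :=
  Sum.elim Sum.inl (fun i => Sum.inr (Sum.inl i))

/-- Embedding of the top/bottom rows of the lower diagram `p` into the
three-row diagram. -/
def downMap (k : ℕ) : Fin k ⊕ Fin k → Fin k ⊕ (Fin k ⊕ Fin k) :=
  Sum.elim (fun i => Sum.inr (Sum.inl i)) (fun i => Sum.inr (Sum.inr i))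

/-- The partition of the three-row diagram obtained by stacking a diagram of `q`
on top of a diagram of `p` (identifying the bottom row of `q` with the top row
of `p`): the equivalence relation generated by the copies of `q` and `p`. -/
def stackSetoid {k : ℕ} (p q : Pk k) : Setoid (Fin k ⊕ (Fin k ⊕ Fin k)) :=
  sInf {s | ∀ x y,
    ((∃ a b, upMap k a = x ∧ upMap k b = y ∧ q.r a b) ∨
     (∃ a b, downMap k a = x ∧ downMap k b = y ∧ p.r a b)) → s.r x y}

/-- The composition `p ∘ q` (a diagram of `q` stacked above a diagram of `p`),
obtained by restricting the stacked partition to the outer rows. -/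
def comp {k : ℕ} (p q : Pk k) : Pk k :=
  Setoid.comap (Sum.elim Sum.inl (fun i => Sum.inr (Sum.inr i))) (stackSetoid p q)

/-- `κ(p,q)`: the number of connected components of the stacked diagram entirely
contained in the middle row. -/
def kappaP {k : ℕ} (p q : Pk k) : ℕ :=
  Nat.card {c : Quotient (stackSetoid p q) //
    ∀ x, Quotient.mk (stackSetoid p q) x = c → ∃ i : Fin k, x = Sum.inr (Sum.inl i)}

/-- The transpose `ᵗp`, exchanging the two rows. -/
def transpose {k : ℕ} (p : Pk k) : Pk k := Setoid.comap Sum.swap p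

/-- The disjoint-union partition on a sum type. -/
def sumSetoid {α β : Type*} (p : Setoid α) (q : Setoid β) : Setoid (α ⊕ β) :=
  Setoid.ker (Sum.map (Quotient.mk p) (Quotient.mk q))

/-- Reindexing of the rows for the tensor product. -/
def reindex (k l : ℕ) :
    Fin (k + l) ⊕ Fin (k + l) → (Fin k ⊕ Fin k) ⊕ (Fin l ⊕ Fin l) :=
  Sum.elim
    (fun j => Sum.elim (fun a => Sum.inl (Sum.inl a)) (fun b => Sum.inr (Sum.inl b))
      (finSumFinEquiv.symm j))
    (fun j => Sum.elim (fun a => Sum.inl (Sum.inr a)) (fun b => Sum.inr (Sum.inr b))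
      (finSumFinEquiv.symm j))

/-- The tensor product `p ⊗ q ∈ P_{k+l}`: a diagram of `p` placed to the left of
a diagram of `q`. -/
def tensor {k l : ℕ} (p : Pk k) (q : Pk l) : Pk (k + l) :=
  Setoid.comap (reindex k l) (sumSetoid p q)

/-- The `≺`-defect `η(p,q)`. -/
def eta {k : ℕ} (p q : Pk k) : ℚ :=
  pdist (idk k) p + pdist (idk k) q - pdist (idk k) (comp p q)
    - ((k : ℚ) + (nc (comp p q) : ℚ) - (nc p : ℚ) - (nc q : ℚ)) / 2 - (kappaP p q : ℚ)

/-- The Kreweras complement of `p'` in `p`: the set of `p''` with `p = p' ∘ p''`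
realizing equality in the `≺`-defect inequality. -/
def Krew {k : ℕ} (p p' : Pk k) : Set (Pk k) :=
  {p'' | comp p' p'' = p ∧ eta p' p'' = 0}

/-- `p' ≺ p` : `p'` is an admissible prefix of `p`. -/
def prec {k : ℕ} (p' p : Pk k) : Prop :=
  ∃ p'', comp p' p'' = p ∧ eta p' p'' = 0

/-- The partition of `{1,…,k}` into the orbits (cycles) of the permutation `σ`. -/
def cycleSetoid {k : ℕ} (σ : Equiv.Perm (Fin k)) : Setoid (Fin k) :=
  ⟨σ.SameCycle,
    ⟨fun x => Equiv.Perm.SameCycle.refl σ x, fun h => h.symm, fun h₁ h₂ => h₁.trans h₂⟩⟩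

/-- A partition of `{1,…,k}` is non-crossing if there are no `a < b < c < d` with
`a, c` in one block and `b, d` in a different block. -/
def NonCrossing {k : ℕ} (π : Setoid (Fin k)) : Prop :=
  ¬ ∃ a b c d : Fin k, a < b ∧ b < c ∧ c < d ∧ π.r a c ∧ π.r b d ∧ ¬ π.r a b

/-- The map sending a permutation partition to the partition of `{1,…,k}` into
the orbits of the corresponding bijection (the blocks of `p ⊔ id_k` restricted
to the top row). -/
def orbitMap {k : ℕ} (p : Pk k) : Setoid (Fin k) :=
  Setoid.comap (Sum.inl : Fin k → Fin k ⊕ Fin k) (p ⊔ idk k)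

/-- The permutation `(1,k+1)(2,k+2)⋯(k,2k)` of `{1,…,2k}`. -/
def tauPerm (k : ℕ) : Equiv.Perm (Fin (k + k)) :=
  (finSumFinEquiv.symm.trans (Equiv.sumComm (Fin k) (Fin k))).trans finSumFinEquiv

/-- The left part of a partition in `P_{k₁+k₂}`. -/
def leftPart {k₁ k₂ : ℕ} (p : Pk (k₁ + k₂)) : Pk k₁ :=
  Setoid.comap (Sum.map (Fin.castAdd k₂) (Fin.castAdd k₂)) p

/-- The right part of a partition in `P_{k₁+k₂}`. -/
def rightPart {k₁ k₂ : ℕ} (p : Pk (k₁ + k₂)) : Pk k₂ :=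
  Setoid.comap (Sum.map (Fin.natAdd k₁) (Fin.natAdd k₁)) p

/-- The `p`-moment `m_p(E_N) = Tr_N(E_N ᵗp)/N^{nc(p ⊔ id_k)}
`= ∑_{p'} (E_N)_{p'} N^{nc(p ⊔ p') - nc(p ⊔ id_k)}`. -/
def momentF {k : ℕ} (E : ℕ → Pk k → ℂ) (p : Pk k) (N : ℕ) : ℂ :=
  ∑ᶠ p' : Pk k, E N p' * (N : ℂ) ^ ((nc (p ⊔ p') : ℤ) - (nc (p ⊔ idk k) : ℤ))

/-- The `p`-cumulant `κ_p(E_N) = N^{nc p - nc (p ⊔ id_k)} (E_N)_p`. -/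
def cumulantF {k : ℕ} (E : ℕ → Pk k → ℂ) (p : Pk k) (N : ℕ) : ℂ :=
  (N : ℂ) ^ ((nc p : ℤ) - (nc (p ⊔ idk k) : ℤ)) * E N p


section Statement18Aux

open Function

variable {Y Z : Type*} {k : ℕ}

/-- natural map between quotients of comparable setoids -/
def qmap {x y : Setoid X} (h : x ≤ y) : Quotient x → Quotient y :=
  Quotient.map' id (fun _ _ r => h r)

lemma qmap_mk {x y : Setoid X} (h : x ≤ y) (a : X) :
    qmap h (Quotient.mk x a) = Quotient.mk y a := rfl

lemma qmap_surjective {x y : Setoid X} (h : x ≤ y) : Function.Surjective (qmap h) := by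
  intro c
  obtain ⟨a, rfl⟩ := Quotient.exists_rep c
  exact ⟨Quotient.mk x a, rfl⟩

lemma nc_mono [Finite X] {x y : Setoid X} (h : x ≤ y) : nc y ≤ nc x :=
  Nat.card_le_card_of_surjective _ (qmap_surjective h)

lemma eq_of_le_of_nc_le [Finite X] {x y : Setoid X} (h : x ≤ y) (hn : nc x ≤ nc y) : x = y := by
  have hb : Function.Bijective (qmap h) :=
    (qmap_surjective h).bijective_of_nat_card_le hn
  refine le_antisymm h (fun {a b} hr => ?_)
  have : qmap h (Quotient.mk x a) = qmap h (Quotient.mk x b) := by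
    rw [qmap_mk, qmap_mk]; exact Quotient.sound hr
  have := hb.1 this
  exact Quotient.exact this

lemma card_subtype_add (P : X → Prop) [Finite X] :
    Nat.card {x // P x} + Nat.card {x // ¬ P x} = Nat.card X := by
  rw [← Nat.card_sum]
  exact Nat.card_congr (Equiv.sumCompl P)

/-- counting classes via comap: `nc s = nc (comap f s) + (number of classes missing range f)` -/
lemma nc_comap_add_card [Finite X] [Finite Y] (f : Y → X) (s : Setoid X) :
    nc s = nc (Setoid.comap f s) +
      Nat.card {c : Quotient s // ∀ x, Quotient.mk s x = c → x ∉ Set.range f} := by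
  classical
  have key : nc s = Nat.card {c : Quotient s // ∃ x ∈ Set.range f, Quotient.mk s x = c} +
      Nat.card {c : Quotient s // ¬ ∃ x ∈ Set.range f, Quotient.mk s x = c} :=
    (card_subtype_add _).symm
  have e1 : Nat.card {c : Quotient s // ∃ x ∈ Set.range f, Quotient.mk s x = c}
      = nc (Setoid.comap f s) := by
    refine (Nat.card_congr (Equiv.ofBijective ?_ ⟨?_, ?_⟩)).symm
    · exact fun q => Quotient.liftOn' q
        (fun y => ⟨Quotient.mk s (f y), ⟨f y, ⟨y, rfl⟩, rfl⟩⟩)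
        (fun a b (r : s.r (f a) (f b)) => Subtype.ext (Quotient.sound r))
    · intro q1 q2 hq
      obtain ⟨a, rfl⟩ := Quotient.exists_rep q1
      obtain ⟨b, rfl⟩ := Quotient.exists_rep q2
      apply Quotient.sound
      have : Quotient.mk s (f a) = Quotient.mk s (f b) := congrArg Subtype.val hq
      exact (Quotient.exact this : s.r (f a) (f b))
    · rintro ⟨c, ⟨x, ⟨y, rfl⟩, rfl⟩⟩
      exact ⟨Quotient.mk _ y, rfl⟩
  have e2 : Nat.card {c : Quotient s // ¬ ∃ x ∈ Set.range f, Quotient.mk s x = c}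
      = Nat.card {c : Quotient s // ∀ x, Quotient.mk s x = c → x ∉ Set.range f} := by
    apply Nat.card_congr
    apply Equiv.subtypeEquivRight
    intro c
    constructor
    · intro h x hx hr; exact h ⟨x, hr, hx⟩
    · rintro h ⟨x, hx, hc⟩; exact h x hc hx
  rw [key, e1, e2]



section Pair
variable (a b : X)
def pairS (a b : X) : Setoid X := Relation.EqvGen.setoid (fun x y => x = a ∧ y = b)
lemma pairS_rel : (pairS a b) a b := Relation.EqvGen.rel _ _ ⟨rfl, rfl⟩
lemma pairS_le {u : Setoid X} (h : u a b) : pairS a b ≤ u :=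
  Setoid.eqvGen_le (fun x y ⟨hx, hy⟩ => hx ▸ hy ▸ h)
def supPair (u : Setoid X) (a b : X) : Setoid X where
  r x y := u x y ∨ (u x a ∧ u b y) ∨ (u x b ∧ u a y)
  iseqv := by
    constructor
    · intro x; exact Or.inl (u.refl' x)
    · rintro x y (h | ⟨h1, h2⟩ | ⟨h1, h2⟩)
      · exact Or.inl (u.symm' h)
      · exact Or.inr (Or.inr ⟨u.symm' h2, u.symm' h1⟩)
      · exact Or.inr (Or.inl ⟨u.symm' h2, u.symm' h1⟩)
    · rintro x y z (h | ⟨h1, h2⟩ | ⟨h1, h2⟩) (h' | ⟨h1', h2'⟩ | ⟨h1', h2'⟩)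
      · exact Or.inl (u.trans' h h')
      · exact Or.inr (Or.inl ⟨u.trans' h h1', h2'⟩)
      · exact Or.inr (Or.inr ⟨u.trans' h h1', h2'⟩)
      · exact Or.inr (Or.inl ⟨h1, u.trans' h2 h'⟩)
      · exact Or.inl (u.trans' (u.trans' h1 (u.symm' (u.trans' h2 h1'))) h2')
      · exact Or.inl (u.trans' h1 h2')
      · exact Or.inr (Or.inr ⟨h1, u.trans' h2 h'⟩)
      · exact Or.inl (u.trans' h1 h2')
      · exact Or.inr (Or.inr ⟨h1, h2'⟩)
lemma supPair_rel_ab (u : Setoid X) : (supPair u a b) a b :=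
  Or.inr (Or.inl ⟨u.refl' a, u.refl' b⟩)
lemma sup_pair_eq (u : Setoid X) : u ⊔ pairS a b = supPair u a b := by
  have hl : u ≤ supPair u a b := fun {x y} h => Or.inl h
  apply le_antisymm
  · exact sup_le hl (pairS_le a b (supPair_rel_ab a b u))
  · rintro x y (h | ⟨h1, h2⟩ | ⟨h1, h2⟩)
    · exact (le_sup_left : u ≤ u ⊔ pairS a b) h
    · have hab : (u ⊔ pairS a b) a b :=
        (le_sup_right : pairS a b ≤ u ⊔ pairS a b) (pairS_rel a b)
      exact (u ⊔ pairS a b).trans' ((le_sup_left : u ≤ u ⊔ pairS a b) h1)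
        ((u ⊔ pairS a b).trans' hab ((le_sup_left : u ≤ u ⊔ pairS a b) h2))
    · have hab : (u ⊔ pairS a b) a b :=
        (le_sup_right : pairS a b ≤ u ⊔ pairS a b) (pairS_rel a b)
      exact (u ⊔ pairS a b).trans' ((le_sup_left : u ≤ u ⊔ pairS a b) h1)
        ((u ⊔ pairS a b).trans' ((u ⊔ pairS a b).symm' hab)
          ((le_sup_left : u ≤ u ⊔ pairS a b) h2))

variable [Finite X]

lemma nc_le_sup_pair_add_one (u : Setoid X) : nc u ≤ nc (u ⊔ pairS a b) + 1 := by
  classical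
  rw [sup_pair_eq]
  have hcard : Nat.card (Quotient (supPair u a b) ⊕ Unit) = nc (supPair u a b) + 1 := by
    simp [Nat.card_sum, nc]
  rw [nc, ← hcard]
  have hresp : ∀ v w : X, u v w →
      (if u v b ∧ ¬ u a b then (Sum.inr () : Quotient (supPair u a b) ⊕ Unit)
        else Sum.inl (Quotient.mk _ v)) =
      (if u w b ∧ ¬ u a b then (Sum.inr () : Quotient (supPair u a b) ⊕ Unit)
        else Sum.inl (Quotient.mk _ w)) := by
    intro v w hvw
    by_cases hb : u w b ∧ ¬ u a b
    · rw [if_pos hb, if_pos ⟨u.trans' hvw hb.1, hb.2⟩]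
    · have hnb : ¬ (u v b ∧ ¬ u a b) := by
        rintro ⟨h1, h2⟩; exact hb ⟨u.trans' (u.symm' hvw) h1, h2⟩
      rw [if_neg hnb, if_neg hb]
      exact congrArg _ (Quotient.sound (Or.inl hvw))
  set g : Quotient u → Quotient (supPair u a b) ⊕ Unit :=
    Quotient.lift _ hresp with hg
  apply Nat.card_le_card_of_injective g
  intro q1 q2 h
  obtain ⟨v, rfl⟩ := Quotient.exists_rep q1
  obtain ⟨w, rfl⟩ := Quotient.exists_rep q2
  have h' : (if u v b ∧ ¬ u a b then (Sum.inr () : Quotient (supPair u a b) ⊕ Unit)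
        else Sum.inl (Quotient.mk _ v)) =
      (if u w b ∧ ¬ u a b then (Sum.inr () : Quotient (supPair u a b) ⊕ Unit)
        else Sum.inl (Quotient.mk _ w)) := h
  clear h
  by_cases h1 : u v b ∧ ¬ u a b <;> by_cases h2 : u w b ∧ ¬ u a b
  · exact Quotient.sound (u.trans' h1.1 (u.symm' h2.1))
  · rw [if_pos h1, if_neg h2] at h'; exact absurd h' (by simp)
  · rw [if_neg h1, if_pos h2] at h'; exact absurd h' (by simp)
  · rw [if_neg h1, if_neg h2] at h'
    have h3 : (supPair u a b) v w := Quotient.exact (Sum.inl.inj h')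
    rcases h3 with h | ⟨ha, hb⟩ | ⟨ha, hb⟩
    · exact Quotient.sound h
    · by_cases hab : u a b
      · exact Quotient.sound (u.trans' ha (u.trans' hab hb))
      · exact absurd ⟨u.symm' hb, hab⟩ h2
    · by_cases hab : u a b
      · exact Quotient.sound (u.trans' ha (u.trans' (u.symm' hab) hb))
      · exact absurd ⟨ha, hab⟩ h1

lemma nc_sup_pair_lt (u : Setoid X) (h : ¬ u a b) : nc (u ⊔ pairS a b) < nc u := by
  have hle : u ≤ u ⊔ pairS a b := le_sup_left
  haveI : Fintype (Quotient u) := Fintype.ofFinite _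
  haveI : Fintype (Quotient (u ⊔ pairS a b)) := Fintype.ofFinite _
  rw [nc, nc, Nat.card_eq_fintype_card, Nat.card_eq_fintype_card]
  apply Fintype.card_lt_of_surjective_not_injective (qmap hle) (qmap_surjective hle)
  intro hinj
  apply h
  have : qmap hle (Quotient.mk u a) = qmap hle (Quotient.mk u b) := by
    rw [qmap_mk, qmap_mk]
    exact Quotient.sound ((le_sup_right : pairS a b ≤ _) (pairS_rel a b))
  exact Quotient.exact (hinj this)

lemma nc_sup_single (x z : Setoid X) (y : Setoid X)
    (hy : y = ⊥ ∨ ∃ a b, y = pairS a b) :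
    nc (x ⊔ y) + nc (x ⊔ z) ≤ nc x + nc (x ⊔ z ⊔ y) := by
  rcases hy with rfl | ⟨a, b, rfl⟩
  · simp
  by_cases hab : x a b
  · rw [sup_eq_left.mpr (pairS_le a b hab),
      sup_eq_left.mpr (pairS_le a b ((le_sup_left : x ≤ x ⊔ z) hab))]
  · have h1 : nc (x ⊔ pairS a b) < nc x := nc_sup_pair_lt a b x hab
    have h2 : nc x ≤ nc (x ⊔ pairS a b) + 1 := nc_le_sup_pair_add_one a b x
    have h3 : nc (x ⊔ z) ≤ nc (x ⊔ z ⊔ pairS a b) + 1 := nc_le_sup_pair_add_one a b (x ⊔ z)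
    omega

/-- submodularity of the number of blocks -/
lemma nc_submod (x y z : Setoid X) :
    nc (x ⊔ y) + nc (x ⊔ z) ≤ nc x + nc (x ⊔ y ⊔ z) := by
  classical
  haveI : Fintype X := Fintype.ofFinite _
  set f : X × X → Setoid X := fun ab => if y ab.1 ab.2 then pairS ab.1 ab.2 else ⊥ with hf
  have hy : y = Finset.univ.sup f := by
    apply le_antisymm
    · intro v w hvw
      have h1 : f (v, w) ≤ Finset.univ.sup f := Finset.le_sup (Finset.mem_univ _)
      apply h1
      rw [show f (v, w) = pairS v w from if_pos hvw]
      exact pairS_rel v w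
    · apply Finset.sup_le
      intro ab _
      rw [hf]; dsimp only
      split_ifs with hab
      · exact pairS_le _ _ hab
      · exact bot_le
  have key : ∀ s : Finset (X × X), ∀ x : Setoid X,
      nc (x ⊔ s.sup f) + nc (x ⊔ z) ≤ nc x + nc (x ⊔ s.sup f ⊔ z) := by
    intro s
    induction s using Finset.induction_on with
    | empty => intro x; simp
    | insert ab s hns ih =>
      intro x
      rw [Finset.sup_insert]
      have e1 : x ⊔ (f ab ⊔ s.sup f) = (x ⊔ f ab) ⊔ s.sup f := (sup_assoc _ _ _).symm
      have h1 := ih (x ⊔ f ab)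
      have h2 : nc (x ⊔ f ab) + nc (x ⊔ z) ≤ nc x + nc (x ⊔ z ⊔ f ab) := by
        apply nc_sup_single
        rw [hf]; dsimp only
        split_ifs
        · exact Or.inr ⟨ab.1, ab.2, rfl⟩
        · exact Or.inl rfl
      have e2 : x ⊔ z ⊔ f ab = x ⊔ f ab ⊔ z := by
        rw [sup_assoc, sup_assoc, sup_comm z]
      have e3 : x ⊔ f ab ⊔ s.sup f ⊔ z = x ⊔ (f ab ⊔ s.sup f) ⊔ z := by
        rw [sup_assoc x (f ab)]
      rw [e2] at h2
      rw [e1]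
      omega
  have := key Finset.univ x
  rwa [← hy] at this
end Pair


/-- The partition of `X` induced by pushing `s` forward along `f` (extension by singletons). -/
def extS (f : Y → X) (s : Setoid Y) : Setoid X :=
  sInf {w | ∀ a b, s a b → w (f a) (f b)}

lemma extS_rel {f : Y → X} {s : Setoid Y} {a b : Y} (h : s a b) : extS f s (f a) (f b) :=
  Setoid.sInf_iff.mpr (fun _ hw => hw a b h)

lemma extS_le_iff {f : Y → X} {s : Setoid Y} {w : Setoid X} :
    extS f s ≤ w ↔ ∀ a b, s a b → w (f a) (f b) :=
  ⟨fun h a b hr => h (extS_rel hr), fun h => sInf_le h⟩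

lemma extS_mono {f : Y → X} {s t : Setoid Y} (h : s ≤ t) : extS f s ≤ extS f t :=
  extS_le_iff.mpr (fun a b hr => extS_rel (h hr))

lemma extS_sup (f : Y → X) (s t : Setoid Y) : extS f (s ⊔ t) = extS f s ⊔ extS f t := by
  apply le_antisymm
  · rw [extS_le_iff]
    have : s ⊔ t ≤ Setoid.comap f (extS f s ⊔ extS f t) := by
      apply sup_le
      · intro a b h
        exact (Setoid.comap_rel _ _ _ _).mpr ((le_sup_left : extS f s ≤ _) (extS_rel h))
      · intro a b h
        exact (Setoid.comap_rel _ _ _ _).mpr ((le_sup_right : extS f t ≤ _) (extS_rel h))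
    exact fun a b hr => (Setoid.comap_rel _ _ _ _).mp (this hr)
  · exact sup_le (extS_mono le_sup_left) (extS_mono le_sup_right)

lemma extS_comp (g : Z → X) (f : Y → Z) (s : Setoid Y) :
    extS g (extS f s) = extS (g ∘ f) s := by
  apply le_antisymm
  · rw [extS_le_iff]
    have : extS f s ≤ Setoid.comap g (extS (g ∘ f) s) := by
      rw [extS_le_iff]
      intro a b h
      exact (Setoid.comap_rel _ _ _ _).mpr (extS_rel (f := g ∘ f) h)
    exact fun a b hr => (Setoid.comap_rel _ _ _ _).mp (this hr)
  · rw [extS_le_iff]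
    intro a b h
    exact extS_rel (f := g) (extS_rel (f := f) h)

def extFun (f : Y → X) (s : Setoid Y) : X → Quotient s ⊕ {x : X // x ∉ Set.range f} :=
  fun x => if h : x ∈ Set.range f then Sum.inl (Quotient.mk s h.choose) else Sum.inr ⟨x, h⟩

lemma extFun_apply (f : Y → X) (s : Setoid Y) (hf : Injective f) (a : Y) :
    extFun f s (f a) = Sum.inl (Quotient.mk s a) := by
  have h : f a ∈ Set.range f := ⟨a, rfl⟩
  rw [extFun, dif_pos h]
  congr 1
  exact congrArg _ (hf h.choose_spec)

lemma extFun_apply_out (f : Y → X) (s : Setoid Y) {x : X} (h : x ∉ Set.range f) :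
    extFun f s x = Sum.inr ⟨x, h⟩ := dif_neg h

lemma extS_eq_ker (f : Y → X) (s : Setoid Y) (hf : Injective f) :
    extS f s = Setoid.ker (extFun f s) := by
  apply le_antisymm
  · rw [extS_le_iff]
    intro a b h
    rw [Setoid.ker_def, extFun_apply f s hf, extFun_apply f s hf]
    exact congrArg _ (Quotient.sound h)
  · intro x y h
    rw [Setoid.ker_def] at h
    by_cases hx : x ∈ Set.range f <;> by_cases hy : y ∈ Set.range f
    · obtain ⟨a, rfl⟩ := hx
      obtain ⟨b, rfl⟩ := hy
      rw [extFun_apply f s hf, extFun_apply f s hf] at h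
      exact extS_rel (Quotient.exact (Sum.inl.inj h))
    · rw [extFun_apply_out f s hy] at h
      rcases hx with ⟨a, rfl⟩
      rw [extFun_apply f s hf] at h
      exact absurd h (by simp)
    · rw [extFun_apply_out f s hx] at h
      rcases hy with ⟨b, rfl⟩
      rw [extFun_apply f s hf] at h
      exact absurd h (by simp)
    · rw [extFun_apply_out f s hx, extFun_apply_out f s hy] at h
      obtain rfl : x = y := congrArg Subtype.val (Sum.inr.inj h)
      exact (extS f s).refl' x

lemma extFun_surjective (f : Y → X) (s : Setoid Y) (hf : Injective f) :
    Surjective (extFun f s) := by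
  rintro (c | ⟨x, hx⟩)
  · obtain ⟨a, rfl⟩ := Quotient.exists_rep c
    exact ⟨f a, extFun_apply f s hf a⟩
  · exact ⟨x, extFun_apply_out f s hx⟩

lemma nc_extS [Finite X] [Finite Y] (f : Y → X) (s : Setoid Y) (hf : Injective f) :
    nc (extS f s) = nc s + (Nat.card X - Nat.card Y) := by
  rw [extS_eq_ker f s hf, nc]
  rw [Nat.card_congr (Setoid.quotientKerEquivOfSurjective _ (extFun_surjective f s hf))]
  rw [Nat.card_sum, nc]
  congr 1
  have h1 : Nat.card {x : X // x ∈ Set.range f} + Nat.card {x : X // x ∉ Set.range f}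
      = Nat.card X := by
    rw [← Nat.card_sum]; exact Nat.card_congr (Equiv.sumCompl _)
  have h2 : Nat.card {x : X // x ∈ Set.range f} = Nat.card Y := by
    rw [show {x : X // x ∈ Set.range f} = (Set.range f : Set X) from rfl]
    rw [Nat.card_range_of_injective hf]
  omega

lemma comap_extS (f : Y → X) (s : Setoid Y) (hf : Injective f) :
    Setoid.comap f (extS f s) = s := by
  ext a b
  rw [Setoid.comap_rel, extS_eq_ker f s hf, Setoid.ker_def,
    extFun_apply f s hf, extFun_apply f s hf]
  constructor
  · intro h; exact Quotient.exact (Sum.inl.inj h)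
  · intro h; exact congrArg _ (Quotient.sound h)

lemma extS_rel_cases {f : Y → X} {s : Setoid Y} (hf : Injective f) {x y : X}
    (h : extS f s x y) : x = y ∨ (x ∈ Set.range f ∧ y ∈ Set.range f) := by
  rw [extS_eq_ker f s hf, Setoid.ker_def] at h
  by_cases hx : x ∈ Set.range f <;> by_cases hy : y ∈ Set.range f
  · exact Or.inr ⟨hx, hy⟩
  all_goals try (rw [extFun_apply_out f s hy] at h)
  all_goals try (rw [extFun_apply_out f s hx] at h)
  · obtain ⟨a, rfl⟩ := hx
    rw [extFun_apply f s hf] at h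
    exact absurd h (by simp)
  · obtain ⟨b, rfl⟩ := hy
    rw [extFun_apply f s hf] at h
    exact absurd h (by simp)
  · exact Or.inl (congrArg Subtype.val (Sum.inr.inj h))

lemma Setoid.comap_comp (f : Y → X) (g : Z → Y) (s : Setoid X) :
    Setoid.comap (f ∘ g) s = Setoid.comap g (Setoid.comap f s) := rfl



section Rows
variable (k : ℕ)
abbrev Tk := Fin k ⊕ (Fin k ⊕ Fin k)
def r1 (i : Fin k) : Tk k := inl i
def r2 (i : Fin k) : Tk k := inr (inl i)
def r3 (i : Fin k) : Tk k := inr (inr i)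
def outMap : Fin k ⊕ Fin k → Tk k := Sum.elim Sum.inl (fun i => Sum.inr (Sum.inr i))

lemma upMap_inj : Injective (upMap k) := by
  intro x y h; cases x <;> cases y <;> simp [upMap] at h <;> simp [h]
lemma downMap_inj : Injective (downMap k) := by
  intro x y h; cases x <;> cases y <;> simp [downMap] at h <;> simp [h]
lemma outMap_inj : Injective (outMap k) := by
  intro x y h; cases x <;> cases y <;> simp [outMap] at h <;> simp [h]

lemma card2k : Nat.card (Fin k ⊕ Fin k) = 2 * k := by
  simp [Nat.card_sum]; ring
lemma cardTk : Nat.card (Tk k) = 3 * k := by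
  simp [Nat.card_sum]; ring
end Rows

variable {k : ℕ}

lemma stack_eq (p q : Pk k) :
    stackSetoid p q = extS (upMap k) q ⊔ extS (downMap k) p := by
  apply le_antisymm
  · apply sInf_le
    rintro x y (⟨a, b, rfl, rfl, hab⟩ | ⟨a, b, rfl, rfl, hab⟩)
    · exact (le_sup_left : extS (upMap k) q ≤ _) (extS_rel hab)
    · exact (le_sup_right : extS (downMap k) p ≤ _) (extS_rel hab)
  · apply sup_le
    · rw [extS_le_iff]
      intro a b h
      exact Setoid.sInf_iff.mpr (fun s hs => hs _ _ (Or.inl ⟨a, b, rfl, rfl, h⟩))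
    · rw [extS_le_iff]
      intro a b h
      exact Setoid.sInf_iff.mpr (fun s hs => hs _ _ (Or.inr ⟨a, b, rfl, rfl, h⟩))

lemma comp_eq (p q : Pk k) : comp p q = Setoid.comap (outMap k) (stackSetoid p q) := rfl

lemma nc_idk : nc (idk k) = k := by
  rw [idk, nc]
  have hs : Surjective (Sum.elim (id : Fin k → Fin k) id) := by
    intro i; exact ⟨inl i, rfl⟩
  rw [Nat.card_congr (Setoid.quotientKerEquivOfSurjective _ hs)]
  simp

/-- number of blocks of stack = blocks of comp + kappa -/
lemma nc_stack (p q : Pk k) : nc (stackSetoid p q) = nc (comp p q) + kappaP p q := by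
  rw [comp_eq, nc_comap_add_card (outMap k) (stackSetoid p q), kappaP]
  congr 1
  apply Nat.card_congr
  apply Equiv.subtypeEquivRight
  intro c
  have hiff : ∀ x : Tk k, (x ∉ Set.range (outMap k)) ↔ (∃ i : Fin k, x = Sum.inr (Sum.inl i)) := by
    rintro (i | i | i)
    · constructor
      · intro h; exact absurd ⟨inl i, rfl⟩ h
      · rintro ⟨j, hj⟩; exact absurd hj (by simp)
    · constructor
      · intro _; exact ⟨i, rfl⟩
      · rintro ⟨j, hj⟩ ⟨(a | a), ha⟩ <;> simp [outMap] at ha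
    · constructor
      · intro h; exact absurd ⟨inr i, rfl⟩ h
      · rintro ⟨j, hj⟩; exact absurd hj (by simp)
  constructor
  · intro h x hx; exact (hiff x).mp (h x hx)
  · intro h x hx; exact (hiff x).mpr (h x hx)



lemma eta_eq (p q : Pk k) :
    eta p q = (((nc p : ℤ) + nc q + nc (idk k ⊔ comp p q))
      - ((nc (stackSetoid p q) : ℤ) + nc (idk k ⊔ p) + nc (idk k ⊔ q)) : ℤ) := by
  have h1 : (kappaP p q : ℚ) = (nc (stackSetoid p q) : ℚ) - nc (comp p q) := by
    have h := nc_stack p q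
    have h2 : (nc (stackSetoid p q) : ℚ) = ((nc (comp p q) + kappaP p q : ℕ) : ℚ) := by
      exact_mod_cast congrArg (fun n : ℕ => (n : ℚ)) h
    push_cast at h2
    linarith
  rw [eta, pdist, pdist, pdist, nc_idk, h1]
  push_cast
  ring

lemma idk_rel (i : Fin k) : (idk k) (Sum.inl i) (Sum.inr i) := by
  show Setoid.ker _ _ _
  rw [Setoid.ker_def]
  rfl

lemma nc_sup_comm (a b : Setoid X) : nc (a ⊔ b) = nc (b ⊔ a) := by rw [sup_comm]

lemma comap_mono {f : Y → X} {s t : Setoid X} (h : s ≤ t) :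
    Setoid.comap f s ≤ Setoid.comap f t := by
  intro x y hr
  exact (Setoid.comap_rel _ _ _ _).mpr (h ((Setoid.comap_rel _ _ _ _).mp hr))

/-- key inequality (★) -/
lemma star (p' p'' : Pk k) :
    (nc (stackSetoid p' p'') : ℤ) + nc (idk k ⊔ p'') ≤
      nc p'' + nc (comp p' p'' ⊔ p') := by
  set Q := extS (upMap k) p'' with hQ
  set A := extS (downMap k) p' with hA
  have hS : stackSetoid p' p'' = Q ⊔ A := stack_eq p' p''
  set M := extS (upMap k) (idk k) with hM
  have hQM : Q ⊔ M = extS (upMap k) (p'' ⊔ idk k) := (extS_sup _ _ _).symm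
  have hncQ : nc Q = nc p'' + k := by
    rw [hQ, nc_extS _ _ (upMap_inj k), card2k, cardTk]; omega
  have hncQM : nc (Q ⊔ M) = nc (p'' ⊔ idk k) + k := by
    rw [hQM, nc_extS _ _ (upMap_inj k), card2k, cardTk]; omega
  have hsub : nc (Q ⊔ A) + nc (Q ⊔ M) ≤ nc Q + nc (Q ⊔ A ⊔ M) := nc_submod Q A M
  set W := Q ⊔ A ⊔ M with hW
  have hMW : M ≤ W := le_sup_right
  have hAW : A ≤ W := le_trans le_sup_right (le_sup_left : Q ⊔ A ≤ W)
  have hSW : stackSetoid p' p'' ≤ W := by rw [hS]; exact le_sup_left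
  have hbridge : ∀ z : Fin k ⊕ Fin k, W (outMap k z) (downMap k z) := by
    rintro (i | i)
    · exact hMW (extS_rel (idk_rel i))
    · exact W.refl' _
  have hWout : nc W = nc (Setoid.comap (outMap k) W) := by
    rw [nc_comap_add_card (outMap k) W]
    have hEmpty : IsEmpty {c : Quotient W // ∀ x, Quotient.mk W x = c → x ∉ Set.range (outMap k)} := by
      constructor
      rintro ⟨c, hc⟩
      obtain ⟨x, hx⟩ := Quotient.exists_rep c
      rcases x with i | i | i
      · exact hc _ hx ⟨inl i, rfl⟩
      · have hrel : W (inl i : Tk k) (inr (inl i)) := hMW (extS_rel (idk_rel i))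
        have : Quotient.mk W (inl i : Tk k) = c := by
          rw [← hx]; exact Quotient.sound hrel
        exact hc _ this ⟨inl i, rfl⟩
      · exact hc _ hx ⟨inr i, rfl⟩
    rw [Nat.card_of_isEmpty]
    omega
  have hle : comp p' p'' ⊔ p' ≤ Setoid.comap (outMap k) W := by
    apply sup_le
    · rw [comp_eq]; exact comap_mono hSW
    · intro x y h
      refine (Setoid.comap_rel _ _ _ _).mpr ?_
      exact W.trans' (hbridge x) (W.trans' (hAW (extS_rel h)) (W.symm' (hbridge y)))
  have h1 : nc (Setoid.comap (outMap k) W) ≤ nc (comp p' p'' ⊔ p') := by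
    have := nc_mono hle
    omega
  have h2 : nc (idk k ⊔ p'') = nc (p'' ⊔ idk k) := nc_sup_comm _ _
  rw [hS]
  push_cast
  omega

/-- triangle defect identity -/
lemma pdist_defect (b p' p : Setoid X) :
    pdist b p' + pdist p' p - pdist b p =
      ((nc p' : ℚ) + nc (b ⊔ p)) - (nc (b ⊔ p') + nc (p' ⊔ p)) := by
  rw [pdist, pdist, pdist]; ring

lemma geo_of_prec (p' p : Pk k) (h : prec p' p) : geoLE (idk k) p' p := by
  obtain ⟨p'', hcomp, heta⟩ := h
  have hF := eta_eq p' p''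
  rw [heta] at hF
  have hFz : ((nc p' : ℤ) + nc p'' + nc (idk k ⊔ comp p' p''))
      = ((nc (stackSetoid p' p'') : ℤ) + nc (idk k ⊔ p') + nc (idk k ⊔ p'')) := by
    have : (0 : ℚ) = (((nc p' : ℤ) + nc p'' + nc (idk k ⊔ comp p' p''))
      - ((nc (stackSetoid p' p'') : ℤ) + nc (idk k ⊔ p') + nc (idk k ⊔ p'')) : ℤ) := hF
    have := this.symm
    have h2 : (((nc p' : ℤ) + nc p'' + nc (idk k ⊔ comp p' p''))
      - ((nc (stackSetoid p' p'') : ℤ) + nc (idk k ⊔ p') + nc (idk k ⊔ p'')) : ℤ) = 0 := by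
      exact_mod_cast this
    omega
  rw [← hcomp]
  set c := comp p' p'' with hc
  -- lower bound : triangle inequality
  have hlow : (nc (idk k ⊔ p') : ℤ) + nc (p' ⊔ c) ≤ nc p' + nc (idk k ⊔ c) := by
    have hs : nc (p' ⊔ idk k) + nc (p' ⊔ c) ≤ nc p' + nc (p' ⊔ idk k ⊔ c) :=
      nc_submod p' (idk k) c
    have hm : nc (p' ⊔ idk k ⊔ c) ≤ nc (idk k ⊔ c) := by
      apply nc_mono
      apply sup_le (le_trans le_sup_right le_sup_left) le_sup_right
    have he : nc (p' ⊔ idk k) = nc (idk k ⊔ p') := nc_sup_comm _ _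
    push_cast
    omega
  -- upper bound via star
  have hup : (nc p' : ℤ) + nc (idk k ⊔ c) ≤ nc (idk k ⊔ p') + nc (p' ⊔ c) := by
    have hst := star p' p''
    have he : nc (c ⊔ p') = nc (p' ⊔ c) := nc_sup_comm _ _
    rw [← hc] at hst
    omega
  have hD : pdist (idk k) p' + pdist p' c - pdist (idk k) c = 0 := by
    rw [pdist_defect]
    have : ((nc p' : ℤ) + nc (idk k ⊔ c)) = (nc (idk k ⊔ p') + nc (p' ⊔ c) : ℤ) :=
      le_antisymm hup hlow
    have hq : ((nc p' : ℚ) + nc (idk k ⊔ c)) = (nc (idk k ⊔ p') + nc (p' ⊔ c) : ℚ) := by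
      exact_mod_cast this
    linarith
  rw [geoLE]
  linarith



/-- explicit form of the stack over the identity -/
def g0 (p : Pk k) : Tk k → Quotient p :=
  Sum.elim (fun i => Quotient.mk p (inl i))
    (Sum.elim (fun i => Quotient.mk p (inl i)) (fun i => Quotient.mk p (inr i)))

def piT (k : ℕ) : Tk k → Fin k ⊕ Fin k :=
  Sum.elim (fun i => inl i) (Sum.elim (fun i => inl i) (fun i => inr i))

lemma g0_eq (p : Pk k) (x : Tk k) : g0 p x = Quotient.mk p (piT k x) := by
  rcases x with i | i | i <;> rfl

lemma stack_idk (p : Pk k) : stackSetoid p (idk k) = Setoid.ker (g0 p) := by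
  rw [stack_eq]
  apply le_antisymm
  · apply sup_le
    · rw [extS_le_iff]
      intro a b h
      rw [Setoid.ker_def]
      have h' : Sum.elim id id a = Sum.elim id id b := Setoid.ker_def.mp h
      rcases a with i | i <;> rcases b with j | j <;>
        simp only [Sum.elim_inl, Sum.elim_inr, id] at h' <;>
        subst h' <;> rfl
    · rw [extS_le_iff]
      intro a b h
      rw [Setoid.ker_def]
      have : ∀ z : Fin k ⊕ Fin k, g0 p (downMap k z) = Quotient.mk p z := by
        rintro (i | i) <;> rfl
      rw [this, this]
      exact Quotient.sound h
  · intro x y h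
    rw [Setoid.ker_def, g0_eq, g0_eq] at h
    set Su := extS (upMap k) (idk k) ⊔ extS (downMap k) p with hSu
    have hbr : ∀ x : Tk k, Su x (downMap k (piT k x)) := by
      rintro (i | i | i)
      · exact (le_sup_left : extS (upMap k) (idk k) ≤ Su) (extS_rel (idk_rel i))
      · exact Su.refl' _
      · exact Su.refl' _
    have hmid : Su (downMap k (piT k x)) (downMap k (piT k y)) :=
      (le_sup_right : extS (downMap k) p ≤ Su) (extS_rel (Quotient.exact h))
    exact Su.trans' (hbr x) (Su.trans' hmid (Su.symm' (hbr y)))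

lemma comp_idk (p : Pk k) : comp p (idk k) = p := by
  rw [comp_eq, stack_idk]
  ext a b
  rw [Setoid.comap_rel, Setoid.ker_def]
  have h1 : ∀ z : Fin k ⊕ Fin k, g0 p (outMap k z) = Quotient.mk p z := by
    rintro (i | i) <;> rfl
  rw [h1, h1]
  exact ⟨Quotient.exact, Quotient.sound⟩

lemma kappa_idk (p : Pk k) : kappaP p (idk k) = 0 := by
  rw [kappaP]
  have : IsEmpty {c : Quotient (stackSetoid p (idk k)) //
      ∀ x, Quotient.mk (stackSetoid p (idk k)) x = c → ∃ i : Fin k, x = Sum.inr (Sum.inl i)} := by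
    constructor
    rintro ⟨c, hc⟩
    obtain ⟨x, hx⟩ := Quotient.exists_rep c
    obtain ⟨i, rfl⟩ := hc x hx
    have hrel : stackSetoid p (idk k) (inl i : Tk k) (inr (inl i)) := by
      rw [stack_idk, Setoid.ker_def]; rfl
    have hmk : Quotient.mk (stackSetoid p (idk k)) (inl i : Tk k) = c := by
      rw [← hx]; exact Quotient.sound hrel
    obtain ⟨j, hj⟩ := hc _ hmk
    exact absurd hj (by simp)
  exact Nat.card_of_isEmpty

lemma prec_refl (p : Pk k) : prec p p := by
  refine ⟨idk k, comp_idk p, ?_⟩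
  rw [eta, comp_idk, kappa_idk, nc_idk]
  have : pdist (idk k) (idk k) = 0 := by
    rw [pdist, sup_idem, nc_idk]; ring
  rw [this]
  ring

lemma pdist_comm (p q : Setoid X) : pdist p q = pdist q p := by
  rw [pdist, pdist, sup_comm]; ring

lemma pdist_eq_zero [Finite X] {p q : Setoid X} (h : pdist p q = 0) : p = q := by
  have h1 : nc (p ⊔ q) ≤ nc p := nc_mono le_sup_left
  have h2 : nc (p ⊔ q) ≤ nc q := nc_mono le_sup_right
  have h3 : (nc p : ℚ) + nc q = 2 * nc (p ⊔ q) := by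
    rw [pdist] at h; linarith
  have h4 : nc p + nc q = 2 * nc (p ⊔ q) := by
    have hq : ((nc p + nc q : ℕ) : ℚ) = ((2 * nc (p ⊔ q) : ℕ) : ℚ) := by push_cast; linarith
    exact_mod_cast hq
  have h5 : nc p = nc (p ⊔ q) := by omega
  have h6 : nc q = nc (p ⊔ q) := by omega
  have e1 : p = p ⊔ q := eq_of_le_of_nc_le le_sup_left (by omega)
  have e2 : q = p ⊔ q := eq_of_le_of_nc_le le_sup_right (by omega)
  exact e1.trans e2.symm

lemma prec_antisymm {p p' : Pk k} (h1 : prec p' p) (h2 : prec p p') : p = p' := by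
  have g1 := geo_of_prec _ _ h1
  have g2 := geo_of_prec _ _ h2
  rw [geoLE] at g1 g2
  have hsym : pdist p p' = pdist p' p := pdist_comm _ _
  have hz : pdist p' p = 0 := by linarith
  exact (pdist_eq_zero hz).symm



/-- merge lemma: if every "bad" class of `w` is `v`-related to a good point,
then joining `v` kills at least that many classes. -/
lemma nc_merge [Finite X] (w v : Setoid X) (R : Set X)
    (hv : ∀ c : Quotient w, (∀ x, Quotient.mk w x = c → x ∉ R) →
        ∃ x y, Quotient.mk w x = c ∧ y ∈ R ∧ v x y) :
    nc (w ⊔ v) + Nat.card {c : Quotient w // ∀ x, Quotient.mk w x = c → x ∉ R} ≤ nc w := by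
  classical
  have hcard : Nat.card {c : Quotient w // ∀ x, Quotient.mk w x = c → x ∉ R} +
      Nat.card {c : Quotient w // ¬ ∀ x, Quotient.mk w x = c → x ∉ R} = Nat.card (Quotient w) :=
    card_subtype_add _
  have hsurj : Surjective (fun c : {c : Quotient w // ¬ ∀ x, Quotient.mk w x = c → x ∉ R} =>
      qmap (le_sup_left : w ≤ w ⊔ v) c.1) := by
    intro d
    obtain ⟨x, hx⟩ := Quotient.exists_rep d
    by_cases hb : ∀ x', Quotient.mk w x' = Quotient.mk w x → x' ∉ R
    · obtain ⟨x', y, hx', hyR, hvxy⟩ := hv _ hb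
      have hgood : ¬ ∀ z, Quotient.mk w z = Quotient.mk w y → z ∉ R := by
        intro hbad; exact hbad y rfl hyR
      refine ⟨⟨Quotient.mk w y, hgood⟩, ?_⟩
      show qmap _ (Quotient.mk w y) = d
      rw [qmap_mk, ← hx]
      apply Quotient.sound
      have h1 : (w ⊔ v) y x' := (le_sup_right : v ≤ w ⊔ v) ((v.symm' hvxy))
      have h2 : (w ⊔ v) x' x := by
        apply (le_sup_left : w ≤ w ⊔ v)
        exact Quotient.exact hx'
      exact (w ⊔ v).trans' h1 h2
    · refine ⟨⟨Quotient.mk w x, hb⟩, ?_⟩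
      show qmap _ (Quotient.mk w x) = d
      rw [qmap_mk, hx]
  have h1 : nc (w ⊔ v) ≤
      Nat.card {c : Quotient w // ¬ ∀ x, Quotient.mk w x = c → x ∉ R} :=
    Nat.card_le_card_of_surjective _ hsurj
  have hncw : nc w = Nat.card (Quotient w) := rfl
  omega

/-- the two-step bridging partitions coincide -/
lemma M_exchange :
    extS (upMap k) (idk k) ⊔ extS (downMap k) (idk k)
      = extS (upMap k) (idk k) ⊔ extS (outMap k) (idk k) := by
  have hch : ∀ i : Fin k,
      (extS (upMap k) (idk k) ⊔ extS (outMap k) (idk k)) (inr (inl i) : Tk k) (inr (inr i)) := by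
    intro i
    set Su := extS (upMap k) (idk k) ⊔ extS (outMap k) (idk k) with hSu
    have h1 : Su (inr (inl i) : Tk k) (inl i) :=
      Su.symm' ((le_sup_left : extS (upMap k) (idk k) ≤ Su) (extS_rel (idk_rel i)))
    have h2 : Su (inl i : Tk k) (inr (inr i)) :=
      (le_sup_right : extS (outMap k) (idk k) ≤ Su) (extS_rel (idk_rel i))
    exact Su.trans' h1 h2
  have hch2 : ∀ i : Fin k,
      (extS (upMap k) (idk k) ⊔ extS (downMap k) (idk k)) (inl i : Tk k) (inr (inr i)) := by
    intro i
    set Su := extS (upMap k) (idk k) ⊔ extS (downMap k) (idk k) with hSu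
    have h1 : Su (inl i : Tk k) (inr (inl i)) :=
      (le_sup_left : extS (upMap k) (idk k) ≤ Su) (extS_rel (idk_rel i))
    have h2 : Su (inr (inl i) : Tk k) (inr (inr i)) :=
      (le_sup_right : extS (downMap k) (idk k) ≤ Su) (extS_rel (idk_rel i))
    exact Su.trans' h1 h2
  apply le_antisymm
  · apply sup_le le_sup_left
    rw [extS_le_iff]
    intro a b h
    have h' : Sum.elim id id a = Sum.elim id id b := Setoid.ker_def.mp h
    set Su := extS (upMap k) (idk k) ⊔ extS (outMap k) (idk k)
    rcases a with i | i <;> rcases b with j | j <;>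
      simp only [Sum.elim_inl, Sum.elim_inr, id] at h' <;> subst h'
    · exact Su.refl' _
    · exact hch i
    · exact Su.symm' (hch i)
    · exact Su.refl' _
  · apply sup_le le_sup_left
    rw [extS_le_iff]
    intro a b h
    have h' : Sum.elim id id a = Sum.elim id id b := Setoid.ker_def.mp h
    set Su := extS (upMap k) (idk k) ⊔ extS (downMap k) (idk k)
    rcases a with i | i <;> rcases b with j | j <;>
      simp only [Sum.elim_inl, Sum.elim_inr, id] at h' <;> subst h'
    · exact Su.refl' _
    · exact hch2 i
    · exact Su.symm' (hch2 i)
    · exact Su.refl' _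

/-- eta is nonnegative, in integer form -/
lemma F_nonneg (p q : Pk k) :
    (nc (stackSetoid p q) : ℤ) + nc (idk k ⊔ p) + nc (idk k ⊔ q)
      ≤ nc p + nc q + nc (idk k ⊔ comp p q) := by
  set P := extS (downMap k) p with hP
  set Q := extS (upMap k) q with hQ
  set M23 := extS (downMap k) (idk k) with hM23
  set M12 := extS (upMap k) (idk k) with hM12
  set M13 := extS (outMap k) (idk k) with hM13
  have hS : stackSetoid p q = Q ⊔ P := stack_eq p q
  have hncP : nc P = nc p + k := by rw [hP, nc_extS _ _ (downMap_inj k), card2k, cardTk]; omega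
  have hncQ : nc Q = nc q + k := by rw [hQ, nc_extS _ _ (upMap_inj k), card2k, cardTk]; omega
  have hncPM : nc (P ⊔ M23) = nc (p ⊔ idk k) + k := by
    rw [hP, hM23, ← extS_sup, nc_extS _ _ (downMap_inj k), card2k, cardTk]; omega
  have hncQM : nc (Q ⊔ M12) = nc (q ⊔ idk k) + k := by
    rw [hQ, hM12, ← extS_sup, nc_extS _ _ (upMap_inj k), card2k, cardTk]; omega
  -- the bound for the composition term
  set W := stackSetoid p q ⊔ M13 with hW
  set kap := Nat.card {c : Quotient W // ∀ x, Quotient.mk W x = c → x ∉ Set.range (outMap k)}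
    with hkap
  have hWcard : nc W = nc (Setoid.comap (outMap k) W) + kap :=
    nc_comap_add_card (outMap k) W
  have hWle : comp p q ⊔ idk k ≤ Setoid.comap (outMap k) W := by
    apply sup_le
    · rw [comp_eq]; exact comap_mono le_sup_left
    · intro x y h
      exact (Setoid.comap_rel _ _ _ _).mpr
        ((le_sup_right : M13 ≤ W) (extS_rel h))
  have hcompb : nc (Setoid.comap (outMap k) W) ≤ nc (comp p q ⊔ idk k) := nc_mono hWle
  -- merge : joining M12 to W kills at least kap classes
  have hmerge : nc (W ⊔ M12) + kap ≤ nc W := by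
    apply nc_merge
    intro c hc
    obtain ⟨x, hx⟩ := Quotient.exists_rep c
    rcases x with i | i | i
    · exact absurd ⟨inl i, rfl⟩ (hc _ hx)
    · refine ⟨inr (inl i), inl i, hx, ⟨inl i, rfl⟩, ?_⟩
      exact M12.symm' (extS_rel (idk_rel i))
    · exact absurd ⟨inr i, rfl⟩ (hc _ hx)
  -- submodularity chain
  have hsub1 : nc (P ⊔ Q) + nc (P ⊔ M23) ≤ nc P + nc (P ⊔ Q ⊔ M23) := nc_submod P Q M23
  have hsub2 : nc (Q ⊔ (P ⊔ M23)) + nc (Q ⊔ M12) ≤ nc Q + nc (Q ⊔ (P ⊔ M23) ⊔ M12) :=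
    nc_submod Q (P ⊔ M23) M12
  -- identify the big joins
  have hM23le : M23 ≤ M12 ⊔ M13 := by
    rw [hM23, hM12, hM13, ← M_exchange]; exact le_sup_right
  have hM13le : M13 ≤ M12 ⊔ M23 := by
    rw [hM23, hM12, hM13, M_exchange]; exact le_sup_right
  have hVZ : Q ⊔ (P ⊔ M23) ⊔ M12 = W ⊔ M12 := by
    have hWQP : W = Q ⊔ P ⊔ M13 := by rw [hW, hS]
    rw [hWQP]
    set N := Q ⊔ (P ⊔ M23) ⊔ M12 with hN
    set Z := Q ⊔ P ⊔ M13 ⊔ M12 with hZ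
    have hQZ : Q ≤ Z := ((le_sup_left : Q ≤ Q ⊔ P).trans
      (le_sup_left : Q ⊔ P ≤ Q ⊔ P ⊔ M13)).trans (le_sup_left : Q ⊔ P ⊔ M13 ≤ Z)
    have hPZ : P ≤ Z := ((le_sup_right : P ≤ Q ⊔ P).trans
      (le_sup_left : Q ⊔ P ≤ Q ⊔ P ⊔ M13)).trans (le_sup_left : Q ⊔ P ⊔ M13 ≤ Z)
    have hM12Z : M12 ≤ Z := le_sup_right
    have hM13Z : M13 ≤ Z := (le_sup_right : M13 ≤ Q ⊔ P ⊔ M13).trans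
      (le_sup_left : Q ⊔ P ⊔ M13 ≤ Z)
    have hM23Z : M23 ≤ Z := hM23le.trans (sup_le hM12Z hM13Z)
    have hQN : Q ≤ N := (le_sup_left : Q ≤ Q ⊔ (P ⊔ M23)).trans
      (le_sup_left : Q ⊔ (P ⊔ M23) ≤ N)
    have hPN : P ≤ N := ((le_sup_left : P ≤ P ⊔ M23).trans
      (le_sup_right : P ⊔ M23 ≤ Q ⊔ (P ⊔ M23))).trans (le_sup_left : Q ⊔ (P ⊔ M23) ≤ N)
    have hM23N : M23 ≤ N := ((le_sup_right : M23 ≤ P ⊔ M23).trans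
      (le_sup_right : P ⊔ M23 ≤ Q ⊔ (P ⊔ M23))).trans (le_sup_left : Q ⊔ (P ⊔ M23) ≤ N)
    have hM12N : M12 ≤ N := le_sup_right
    have hM13N : M13 ≤ N := hM13le.trans (sup_le hM12N hM23N)
    apply le_antisymm
    · exact sup_le (sup_le hQZ (sup_le hPZ hM23Z)) hM12Z
    · exact sup_le (sup_le (sup_le hQN hPN) hM13N) hM12N
  have hPQ : nc (P ⊔ Q) = nc (Q ⊔ P) := nc_sup_comm _ _
  have hPQ : nc (P ⊔ Q) = nc (Q ⊔ P) := nc_sup_comm _ _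
  have hQPM : nc (Q ⊔ (P ⊔ M23)) = nc (P ⊔ Q ⊔ M23) := by
    rw [sup_comm P Q, sup_assoc]
  have hSQP : nc (stackSetoid p q) = nc (Q ⊔ P) := by rw [hS]
  have hWM : nc (Q ⊔ (P ⊔ M23) ⊔ M12) = nc (W ⊔ M12) := by rw [hVZ]
  have hWS : nc W ≤ nc (stackSetoid p q) := nc_mono le_sup_left
  have hc1 : nc (idk k ⊔ p) = nc (p ⊔ idk k) := nc_sup_comm _ _
  have hc2 : nc (idk k ⊔ q) = nc (q ⊔ idk k) := nc_sup_comm _ _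
  have hc3 : nc (idk k ⊔ comp p q) = nc (comp p q ⊔ idk k) := nc_sup_comm _ _
  push_cast
  omega


lemma comap_comp' (f : Y → X) (g : Z → Y) (s : Setoid X) :
    Setoid.comap (f ∘ g) s = Setoid.comap g (Setoid.comap f s) := rfl

section U
variable (k : ℕ)
abbrev Uk := Fin k ⊕ (Fin k ⊕ (Fin k ⊕ Fin k))
def a1 (i : Fin k) : Uk k := inl i
def a2 (i : Fin k) : Uk k := inr (inl i)
def a3 (i : Fin k) : Uk k := inr (inr (inl i))
def a4 (i : Fin k) : Uk k := inr (inr (inr i))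
def g12 : Fin k ⊕ Fin k → Uk k := Sum.elim (a1 k) (a2 k)
def g23 : Fin k ⊕ Fin k → Uk k := Sum.elim (a2 k) (a3 k)
def g34 : Fin k ⊕ Fin k → Uk k := Sum.elim (a3 k) (a4 k)
def r24 : Fin k ⊕ Fin k → Uk k := Sum.elim (a2 k) (a4 k)
def e13 : Fin k ⊕ Fin k → Uk k := Sum.elim (a1 k) (a3 k)
def w14 : Fin k ⊕ Fin k → Uk k := Sum.elim (a1 k) (a4 k)
def ph234 : Tk k → Uk k := Sum.elim (a2 k) (Sum.elim (a3 k) (a4 k))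
def ch123 : Tk k → Uk k := Sum.elim (a1 k) (Sum.elim (a2 k) (a3 k))
def th124 : Tk k → Uk k := Sum.elim (a1 k) (Sum.elim (a2 k) (a4 k))
def ps134 : Tk k → Uk k := Sum.elim (a1 k) (Sum.elim (a3 k) (a4 k))

lemma g12_inj : Injective (g12 k) := by
  rintro (i|i) (j|j) h <;> simp [g12, a1, a2] at h <;> simp [h]
lemma g23_inj : Injective (g23 k) := by
  rintro (i|i) (j|j) h <;> simp [g23, a2, a3] at h <;> simp [h]
lemma g34_inj : Injective (g34 k) := by
  rintro (i|i) (j|j) h <;> simp [g34, a3, a4] at h <;> simp [h]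
lemma r24_inj : Injective (r24 k) := by
  rintro (i|i) (j|j) h <;> simp [r24, a2, a4] at h <;> simp [h]
lemma e13_inj : Injective (e13 k) := by
  rintro (i|i) (j|j) h <;> simp [e13, a1, a3] at h <;> simp [h]
lemma w14_inj : Injective (w14 k) := by
  rintro (i|i) (j|j) h <;> simp [w14, a1, a4] at h <;> simp [h]
lemma ph234_inj : Injective (ph234 k) := by
  rintro (i|i|i) (j|j|j) h <;> simp [ph234, a2, a3, a4] at h <;> simp [h]
lemma ch123_inj : Injective (ch123 k) := by
  rintro (i|i|i) (j|j|j) h <;> simp [ch123, a1, a2, a3] at h <;> simp [h]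
lemma th124_inj : Injective (th124 k) := by
  rintro (i|i|i) (j|j|j) h <;> simp [th124, a1, a2, a4] at h <;> simp [h]
lemma ps134_inj : Injective (ps134 k) := by
  rintro (i|i|i) (j|j|j) h <;> simp [ps134, a1, a3, a4] at h <;> simp [h]
lemma cardUk : Nat.card (Uk k) = 4 * k := by simp [Nat.card_sum]; ring

lemma ph_up : ph234 k ∘ upMap k = g23 k := by funext x; rcases x with i|i <;> rfl
lemma ph_down : ph234 k ∘ downMap k = g34 k := by funext x; rcases x with i|i <;> rfl
lemma ph_out : ph234 k ∘ outMap k = r24 k := by funext x; rcases x with i|i <;> rfl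
lemma ch_up : ch123 k ∘ upMap k = g12 k := by funext x; rcases x with i|i <;> rfl
lemma ch_down : ch123 k ∘ downMap k = g23 k := by funext x; rcases x with i|i <;> rfl
lemma ch_out : ch123 k ∘ outMap k = e13 k := by funext x; rcases x with i|i <;> rfl
lemma th_up : th124 k ∘ upMap k = g12 k := by funext x; rcases x with i|i <;> rfl
lemma th_down : th124 k ∘ downMap k = r24 k := by funext x; rcases x with i|i <;> rfl
lemma th_out : th124 k ∘ outMap k = w14 k := by funext x; rcases x with i|i <;> rfl
lemma ps_up : ps134 k ∘ upMap k = e13 k := by funext x; rcases x with i|i <;> rfl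
lemma ps_down : ps134 k ∘ downMap k = g34 k := by funext x; rcases x with i|i <;> rfl
lemma ps_out : ps134 k ∘ outMap k = w14 k := by funext x; rcases x with i|i <;> rfl
end U

variable {k : ℕ}

/-- transport of a stacked partition into the 4-row diagram -/
lemma stack_transport (p q : Pk k) (f : Tk k → Uk k) (hf : Injective f) :
    extS f (stackSetoid p q) = extS (f ∘ upMap k) q ⊔ extS (f ∘ downMap k) p := by
  rw [stack_eq, extS_sup, extS_comp, extS_comp]

lemma comp_transport (p q : Pk k) (f : Tk k → Uk k) (hf : Injective f) :
    comp p q = Setoid.comap (f ∘ outMap k)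
      (extS (f ∘ upMap k) q ⊔ extS (f ∘ downMap k) p) := by
  rw [← stack_transport p q f hf, comp_eq, comap_comp', comap_extS _ _ hf]


def CUd (c : Pk k) : Setoid (Uk k) := extS (g23 k) c
def PUd (p : Pk k) : Setoid (Uk k) := extS (g34 k) p
def CpUd (c' : Pk k) : Setoid (Uk k) := extS (g12 k) c'
def JUd (p c c' : Pk k) : Setoid (Uk k) := CpUd c' ⊔ CUd c ⊔ PUd p
def PpUd (p c : Pk k) : Setoid (Uk k) := extS (r24 k) (comp p c)
def EUd (c c' : Pk k) : Setoid (Uk k) := extS (e13 k) (comp c c')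

lemma hp'comap (p c : Pk k) : comp p c = Setoid.comap (r24 k) (CUd c ⊔ PUd p) := by
  have := comp_transport p c (ph234 k) (ph234_inj k)
  rwa [ph_up, ph_down, ph_out] at this

lemma he_comap (c c' : Pk k) : comp c c' = Setoid.comap (e13 k) (CpUd c' ⊔ CUd c) := by
  have := comp_transport c c' (ch123 k) (ch123_inj k)
  rwa [ch_up, ch_down, ch_out] at this

lemma hpc_comap (p c c' : Pk k) :
    comp (comp p c) c' = Setoid.comap (w14 k) (CpUd c' ⊔ PpUd p c) := by
  have := comp_transport (comp p c) c' (th124 k) (th124_inj k)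
  rwa [th_up, th_down, th_out] at this

lemma hpe_comap (p c c' : Pk k) :
    comp p (comp c c') = Setoid.comap (w14 k) (EUd c c' ⊔ PUd p) := by
  have := comp_transport p (comp c c') (ps134 k) (ps134_inj k)
  rwa [ps_up, ps_down, ps_out] at this

lemma hP'le (p c : Pk k) : PpUd p c ≤ CUd c ⊔ PUd p := by
  rw [PpUd, extS_le_iff]
  intro a b h
  rw [hp'comap] at h
  exact (Setoid.comap_rel _ _ _ _).mp h

lemma hEle (c c' : Pk k) : EUd c c' ≤ CpUd c' ⊔ CUd c := by
  rw [EUd, extS_le_iff]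
  intro a b h
  rw [he_comap] at h
  exact (Setoid.comap_rel _ _ _ _).mp h

section TransferA
variable (p c c' : Pk k)

lemma transferA :
    ∀ x y : Fin k ⊕ Fin k, JUd p c c' (w14 k x) (w14 k y) →
      (CpUd c' ⊔ PpUd p c) (w14 k x) (w14 k y) := by
  classical
  set V := CUd c ⊔ PUd p with hV
  set W := CpUd c' ⊔ PpUd p c with hW
  have hrelW : ∀ u v : Fin k ⊕ Fin k, V (r24 k u) (r24 k v) → W (r24 k u) (r24 k v) := by
    intro u v h
    have h2 : comp p c u v := by
      rw [hp'comap]; exact (Setoid.comap_rel _ _ _ _).mpr h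
    exact (le_sup_right : PpUd p c ≤ W) (extS_rel h2)
  set g : Uk k → Quotient W ⊕ Quotient V := fun x =>
    match x with
    | Sum.inl i => Sum.inl (Quotient.mk W (a1 k i))
    | Sum.inr (Sum.inl i) => Sum.inl (Quotient.mk W (a2 k i))
    | Sum.inr (Sum.inr (Sum.inl i)) =>
        if h : ∃ y, V (a3 k i) y ∧ y ∈ Set.range (r24 k) then Sum.inl (Quotient.mk W h.choose)
        else Sum.inr (Quotient.mk V (a3 k i))
    | Sum.inr (Sum.inr (Sum.inr i)) => Sum.inl (Quotient.mk W (a4 k i)) with hgdef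
  have hga3 : ∀ i : Fin k, g (a3 k i) =
      (if h : ∃ y, V (a3 k i) y ∧ y ∈ Set.range (r24 k) then Sum.inl (Quotient.mk W h.choose)
        else Sum.inr (Quotient.mk V (a3 k i))) := fun i => rfl
  -- each generator of J is in ker g
  have hC' : ∀ a b, c' a b → g (g12 k a) = g (g12 k b) := by
    intro a b h
    have hrel : W (g12 k a) (g12 k b) := (le_sup_left : CpUd c' ≤ W) (extS_rel h)
    rcases a with i | i <;> rcases b with j | j <;>
      exact congrArg Sum.inl (Quotient.sound hrel)
  have hCrel : ∀ a b, c a b → V (g23 k a) (g23 k b) :=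
    fun a b h => (le_sup_left : CUd c ≤ V) (extS_rel h)
  have hPrel : ∀ a b, p a b → V (g34 k a) (g34 k b) :=
    fun a b h => (le_sup_right : PUd p ≤ V) (extS_rel h)
  -- treatment of a pair (x, a3 i) with x in range r24 and V x (a3 i)
  have hkey : ∀ (u : Fin k ⊕ Fin k) (i : Fin k), V (r24 k u) (a3 k i) →
      g (a3 k i) = Sum.inl (Quotient.mk W (r24 k u)) := by
    intro u i hrel
    have hex : ∃ y, V (a3 k i) y ∧ y ∈ Set.range (r24 k) :=
      ⟨r24 k u, V.symm' hrel, ⟨u, rfl⟩⟩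
    rw [hga3, dif_pos hex]
    obtain ⟨hrel0, v, hv⟩ := hex.choose_spec
    apply congrArg Sum.inl
    apply Quotient.sound
    apply W.symm'
    have hVr : V (r24 k u) (r24 k v) := by
      rw [hv]; exact V.trans' hrel hrel0
    rw [← hv]
    exact hrelW u v hVr
  have ha3a3 : ∀ i j : Fin k, V (a3 k i) (a3 k j) → g (a3 k i) = g (a3 k j) := by
    intro i j hrel
    by_cases hex : ∃ y, V (a3 k i) y ∧ y ∈ Set.range (r24 k)
    · obtain ⟨hrel0, v, hv⟩ := hex.choose_spec
      have h1 : V (r24 k v) (a3 k i) := by rw [hv]; exact V.symm' hrel0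
      have h2 : V (r24 k v) (a3 k j) := V.trans' h1 hrel
      rw [hkey v i h1, hkey v j h2]
    · have hex2 : ¬ ∃ y, V (a3 k j) y ∧ y ∈ Set.range (r24 k) := by
        rintro ⟨y, hy, hyR⟩
        exact hex ⟨y, V.trans' hrel hy, hyR⟩
      rw [hga3, dif_neg hex, hga3, dif_neg hex2]
      exact congrArg Sum.inr (Quotient.sound hrel)
  have hC : ∀ a b, c a b → g (g23 k a) = g (g23 k b) := by
    intro a b h
    rcases a with i | i <;> rcases b with j | j
    · -- a2 a2
      exact congrArg Sum.inl (Quotient.sound (hrelW (inl i) (inl j) (hCrel _ _ h)))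
    · -- a2 i , a3 j
      exact (hkey (inl i) j (hCrel _ _ h)).symm
    · -- a3 i , a2 j
      exact hkey (inl j) i (V.symm' (hCrel _ _ h))
    · exact ha3a3 i j (hCrel _ _ h)
  have hP : ∀ a b, p a b → g (g34 k a) = g (g34 k b) := by
    intro a b h
    rcases a with i | i <;> rcases b with j | j
    · exact ha3a3 i j (hPrel _ _ h)
    · -- a3 i, a4 j
      exact hkey (inr j) i (V.symm' (hPrel _ _ h))
    · exact (hkey (inr i) j (hPrel _ _ h)).symm
    · exact congrArg Sum.inl (Quotient.sound (hrelW (inr i) (inr j) (hPrel _ _ h)))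
  have hker : JUd p c c' ≤ Setoid.ker g := by
    rw [JUd]
    apply sup_le (sup_le ?_ ?_) ?_
    · rw [CpUd, extS_le_iff]; intro a b h; exact hC' a b h
    · rw [CUd, extS_le_iff]; intro a b h; exact hC a b h
    · rw [PUd, extS_le_iff]; intro a b h; exact hP a b h
  intro x y h
  have hg := Setoid.ker_def.mp (hker h)
  have hdir : ∀ z : Fin k ⊕ Fin k, g (w14 k z) = Sum.inl (Quotient.mk W (w14 k z)) := by
    rintro (i | i) <;> rfl
  rw [hdir, hdir] at hg
  exact Quotient.exact (Sum.inl.inj hg)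

lemma transferB :
    ∀ x y : Fin k ⊕ Fin k, JUd p c c' (w14 k x) (w14 k y) →
      (EUd c c' ⊔ PUd p) (w14 k x) (w14 k y) := by
  classical
  set V := CpUd c' ⊔ CUd c with hV
  set W := EUd c c' ⊔ PUd p with hW
  have hrelW : ∀ u v : Fin k ⊕ Fin k, V (e13 k u) (e13 k v) → W (e13 k u) (e13 k v) := by
    intro u v h
    have h2 : comp c c' u v := by
      rw [he_comap]; exact (Setoid.comap_rel _ _ _ _).mpr h
    exact (le_sup_left : EUd c c' ≤ W) (extS_rel h2)
  set g : Uk k → Quotient W ⊕ Quotient V := fun x =>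
    match x with
    | Sum.inl i => Sum.inl (Quotient.mk W (a1 k i))
    | Sum.inr (Sum.inl i) =>
        if h : ∃ y, V (a2 k i) y ∧ y ∈ Set.range (e13 k) then Sum.inl (Quotient.mk W h.choose)
        else Sum.inr (Quotient.mk V (a2 k i))
    | Sum.inr (Sum.inr (Sum.inl i)) => Sum.inl (Quotient.mk W (a3 k i))
    | Sum.inr (Sum.inr (Sum.inr i)) => Sum.inl (Quotient.mk W (a4 k i)) with hgdef
  have hga2 : ∀ i : Fin k, g (a2 k i) =
      (if h : ∃ y, V (a2 k i) y ∧ y ∈ Set.range (e13 k) then Sum.inl (Quotient.mk W h.choose)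
        else Sum.inr (Quotient.mk V (a2 k i))) := fun i => rfl
  have hC'rel : ∀ a b, c' a b → V (g12 k a) (g12 k b) :=
    fun a b h => (le_sup_left : CpUd c' ≤ V) (extS_rel h)
  have hCrel : ∀ a b, c a b → V (g23 k a) (g23 k b) :=
    fun a b h => (le_sup_right : CUd c ≤ V) (extS_rel h)
  have hkey : ∀ (u : Fin k ⊕ Fin k) (i : Fin k), V (e13 k u) (a2 k i) →
      g (a2 k i) = Sum.inl (Quotient.mk W (e13 k u)) := by
    intro u i hrel
    have hex : ∃ y, V (a2 k i) y ∧ y ∈ Set.range (e13 k) :=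
      ⟨e13 k u, V.symm' hrel, ⟨u, rfl⟩⟩
    rw [hga2, dif_pos hex]
    obtain ⟨hrel0, v, hv⟩ := hex.choose_spec
    apply congrArg Sum.inl
    apply Quotient.sound
    apply W.symm'
    have hVr : V (e13 k u) (e13 k v) := by
      rw [hv]; exact V.trans' hrel hrel0
    rw [← hv]
    exact hrelW u v hVr
  have ha2a2 : ∀ i j : Fin k, V (a2 k i) (a2 k j) → g (a2 k i) = g (a2 k j) := by
    intro i j hrel
    by_cases hex : ∃ y, V (a2 k i) y ∧ y ∈ Set.range (e13 k)
    · obtain ⟨hrel0, v, hv⟩ := hex.choose_spec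
      have h1 : V (e13 k v) (a2 k i) := by rw [hv]; exact V.symm' hrel0
      have h2 : V (e13 k v) (a2 k j) := V.trans' h1 hrel
      rw [hkey v i h1, hkey v j h2]
    · have hex2 : ¬ ∃ y, V (a2 k j) y ∧ y ∈ Set.range (e13 k) := by
        rintro ⟨y, hy, hyR⟩
        exact hex ⟨y, V.trans' hrel hy, hyR⟩
      rw [hga2, dif_neg hex, hga2, dif_neg hex2]
      exact congrArg Sum.inr (Quotient.sound hrel)
  have hC' : ∀ a b, c' a b → g (g12 k a) = g (g12 k b) := by
    intro a b h
    rcases a with i | i <;> rcases b with j | j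
    · exact congrArg Sum.inl (Quotient.sound (hrelW (inl i) (inl j) (hC'rel _ _ h)))
    · exact (hkey (inl i) j (hC'rel _ _ h)).symm
    · exact hkey (inl j) i (V.symm' (hC'rel _ _ h))
    · exact ha2a2 i j (hC'rel _ _ h)
  have hC : ∀ a b, c a b → g (g23 k a) = g (g23 k b) := by
    intro a b h
    rcases a with i | i <;> rcases b with j | j
    · exact ha2a2 i j (hCrel _ _ h)
    · exact hkey (inr j) i (V.symm' (hCrel _ _ h))
    · exact (hkey (inr i) j (hCrel _ _ h)).symm
    · exact congrArg Sum.inl (Quotient.sound (hrelW (inr i) (inr j) (hCrel _ _ h)))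
  have hP : ∀ a b, p a b → g (g34 k a) = g (g34 k b) := by
    intro a b h
    have hrel : W (g34 k a) (g34 k b) := (le_sup_right : PUd p ≤ W) (extS_rel h)
    rcases a with i | i <;> rcases b with j | j <;>
      exact congrArg Sum.inl (Quotient.sound hrel)
  have hker : JUd p c c' ≤ Setoid.ker g := by
    rw [JUd]
    apply sup_le (sup_le ?_ ?_) ?_
    · rw [CpUd, extS_le_iff]; intro a b h; exact hC' a b h
    · rw [CUd, extS_le_iff]; intro a b h; exact hC a b h
    · rw [PUd, extS_le_iff]; intro a b h; exact hP a b h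
  intro x y h
  have hg := Setoid.ker_def.mp (hker h)
  have hdir : ∀ z : Fin k ⊕ Fin k, g (w14 k z) = Sum.inl (Quotient.mk W (w14 k z)) := by
    rintro (i | i) <;> rfl
  rw [hdir, hdir] at hg
  exact Quotient.exact (Sum.inl.inj hg)

end TransferA

lemma CP_le_J (p c c' : Pk k) : CUd c ⊔ PUd p ≤ JUd p c c' :=
  sup_le ((le_sup_right : CUd c ≤ CpUd c' ⊔ CUd c).trans le_sup_left) le_sup_right

lemma comp_assoc' (p c c' : Pk k) : comp p (comp c c') = comp (comp p c) c' := by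
  rw [hpe_comap, hpc_comap]
  ext x y
  rw [Setoid.comap_rel, Setoid.comap_rel]
  have hEP : EUd c c' ⊔ PUd p ≤ JUd p c c' :=
    sup_le ((hEle c c').trans le_sup_left) le_sup_right
  have hCP : CpUd c' ⊔ PpUd p c ≤ JUd p c c' :=
    sup_le (le_sup_left.trans le_sup_left) ((hP'le p c).trans (CP_le_J p c c'))
  constructor
  · intro h
    exact transferA p c c' x y (hEP h)
  · intro h
    exact transferB p c c' x y (hCP h)

def isoSetoid (x0 : X) : Setoid X where
  r u v := u = v ∨ (u ≠ x0 ∧ v ≠ x0)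
  iseqv := by
    constructor
    · intro x; exact Or.inl rfl
    · rintro x y (rfl | ⟨h1, h2⟩); · exact Or.inl rfl
      · exact Or.inr ⟨h2, h1⟩
    · rintro x y z (rfl | ⟨h1, h2⟩) (rfl | ⟨h1', h2'⟩)
      · exact Or.inl rfl
      · exact Or.inr ⟨h1', h2'⟩
      · exact Or.inr ⟨h1, h2⟩
      · exact Or.inr ⟨h1, h2'⟩

lemma extS_le_iso {f : Y → X} {s : Setoid Y} {x0 : X} (h : x0 ∉ Set.range f) :
    extS f s ≤ isoSetoid x0 :=
  extS_le_iff.mpr fun a b _ =>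
    Or.inr ⟨fun he => h ⟨a, he⟩, fun he => h ⟨b, he⟩⟩

lemma a4_not_g12 (i : Fin k) : a4 k i ∉ Set.range (g12 k) := by
  rintro ⟨(z | z), hz⟩ <;> simp [g12, a1, a2, a4] at hz
lemma a4_not_g23 (i : Fin k) : a4 k i ∉ Set.range (g23 k) := by
  rintro ⟨(z | z), hz⟩ <;> simp [g23, a2, a3, a4] at hz
lemma a4_not_e13 (i : Fin k) : a4 k i ∉ Set.range (e13 k) := by
  rintro ⟨(z | z), hz⟩ <;> simp [e13, a1, a3, a4] at hz

lemma a4_singleton (c c' : Pk k) (i : Fin k) {y : Uk k}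
    (h : (CpUd c' ⊔ CUd c) y (a4 k i)) : y = a4 k i := by
  have hle : CpUd c' ⊔ CUd c ≤ isoSetoid (a4 k i) :=
    sup_le (extS_le_iso (a4_not_g12 i)) (extS_le_iso (a4_not_g23 i))
  rcases hle h with h1 | ⟨h1, h2⟩
  · exact h1
  · exact absurd rfl h2

lemma e13_sub_ps134 {x : Uk k} (h : x ∈ Set.range (e13 k)) : x ∈ Set.range (ps134 k) := by
  obtain ⟨(z | z), rfl⟩ := h
  · exact ⟨inl z, rfl⟩
  · exact ⟨inr (inl z), rfl⟩

lemma not_ps134_row2 {x : Uk k} (h : x ∉ Set.range (ps134 k)) : ∃ i, x = a2 k i := by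
  rcases x with i | i | i | i
  · exact absurd ⟨inl i, rfl⟩ h
  · exact ⟨i, rfl⟩
  · exact absurd ⟨inr (inl i), rfl⟩ h
  · exact absurd ⟨inr (inr i), rfl⟩ h

/-- the counting inequality `m₂ ≥ k + m₃` -/
lemma m_ineq (p c c' : Pk k) :
    Nat.card {c0 : Quotient (JUd p c c') //
        ∀ x, Quotient.mk (JUd p c c') x = c0 → x ∉ Set.range (ps134 k)} + k
      ≤ Nat.card {c0 : Quotient (CpUd c' ⊔ CUd c) //
        ∀ x, Quotient.mk (CpUd c' ⊔ CUd c) x = c0 → x ∉ Set.range (e13 k)} := by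
  classical
  set V := CpUd c' ⊔ CUd c with hVdef
  have hVJ : V ≤ JUd p c c' := le_sup_left
  have hbad1 : ∀ i : Fin k, ∀ x, Quotient.mk V x = Quotient.mk V (a4 k i) →
      x ∉ Set.range (e13 k) := by
    intro i x hx hxr
    have hrel : V x (a4 k i) := Quotient.exact hx
    have hxeq := a4_singleton c c' i hrel
    subst hxeq
    exact a4_not_e13 i hxr
  have hbad2 : ∀ (c0 : Quotient (JUd p c c')),
      (∀ x, Quotient.mk (JUd p c c') x = c0 → x ∉ Set.range (ps134 k)) →
      ∀ y, Quotient.mk V y = Quotient.mk V (Quotient.exists_rep c0).choose →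
        y ∉ Set.range (e13 k) := by
    intro c0 hc0 y hy hyr
    have hrelV : V y (Quotient.exists_rep c0).choose := Quotient.exact hy
    have hmk : Quotient.mk (JUd p c c') y = c0 := by
      rw [← (Quotient.exists_rep c0).choose_spec]
      exact Quotient.sound (hVJ hrelV)
    exact hc0 y hmk (e13_sub_ps134 hyr)
  set F : (Fin k ⊕ {c0 : Quotient (JUd p c c') //
        ∀ x, Quotient.mk (JUd p c c') x = c0 → x ∉ Set.range (ps134 k)}) →
      {c0 : Quotient V // ∀ x, Quotient.mk V x = c0 → x ∉ Set.range (e13 k)} := fun d =>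
    match d with
    | Sum.inl i => ⟨Quotient.mk V (a4 k i), hbad1 i⟩
    | Sum.inr c0 => ⟨Quotient.mk V (Quotient.exists_rep c0.1).choose, hbad2 c0.1 c0.2⟩
    with hF
  have hinj : Injective F := by
    have hrow2 : ∀ (c0 : Quotient (JUd p c c'))
        (hc0 : ∀ x, Quotient.mk (JUd p c c') x = c0 → x ∉ Set.range (ps134 k)),
        (Quotient.exists_rep c0).choose ∉ Set.range (ps134 k) :=
      fun c0 hc0 => hc0 _ (Quotient.exists_rep c0).choose_spec
    rintro (i | ⟨c0, hc0⟩) (j | ⟨d0, hd0⟩) h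
    · have h' : Quotient.mk V (a4 k i) = Quotient.mk V (a4 k j) := congrArg Subtype.val h
      have heq := a4_singleton c c' j (Quotient.exact h')
      have : i = j := by simpa [a4] using heq
      rw [this]
    · exfalso
      have h' : Quotient.mk V (a4 k i) = Quotient.mk V (Quotient.exists_rep d0).choose :=
        congrArg Subtype.val h
      have heq := a4_singleton c c' i (V.symm' (Quotient.exact h'))
      exact hrow2 d0 hd0 (heq ▸ ⟨inr (inr i), rfl⟩)
    · exfalso
      have h' : Quotient.mk V (Quotient.exists_rep c0).choose = Quotient.mk V (a4 k j) :=
        congrArg Subtype.val h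
      have heq := a4_singleton c c' j (Quotient.exact h')
      exact hrow2 c0 hc0 (heq ▸ ⟨inr (inr j), rfl⟩)
    · have h' : Quotient.mk V (Quotient.exists_rep c0).choose
          = Quotient.mk V (Quotient.exists_rep d0).choose := congrArg Subtype.val h
      have hrelJ : JUd p c c' (Quotient.exists_rep c0).choose (Quotient.exists_rep d0).choose :=
        hVJ (Quotient.exact h')
      have : c0 = d0 := by
        rw [← (Quotient.exists_rep c0).choose_spec, ← (Quotient.exists_rep d0).choose_spec]
        exact Quotient.sound hrelJ
      subst this
      rfl
  have hle := Nat.card_le_card_of_injective F hinj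
  have hcard : Nat.card (Fin k ⊕ {c0 : Quotient (JUd p c c') //
      ∀ x, Quotient.mk (JUd p c c') x = c0 → x ∉ Set.range (ps134 k)})
      = k + Nat.card {c0 : Quotient (JUd p c c') //
      ∀ x, Quotient.mk (JUd p c c') x = c0 → x ∉ Set.range (ps134 k)} := by
    rw [Nat.card_sum]; simp
  omega

lemma cocycle (p c c' : Pk k) :
    (nc (comp c c') : ℤ) + nc (stackSetoid p c) + nc (stackSetoid (comp p c) c')
      ≤ nc (comp p c) + nc (stackSetoid p (comp c c')) + nc (stackSetoid c c') := by
  classical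
  have h1 : nc (CUd c ⊔ PUd (k := k) p) = nc (stackSetoid p c) + k := by
    have ht := stack_transport p c (ph234 k) (ph234_inj k)
    rw [ph_up, ph_down] at ht
    rw [show CUd c ⊔ PUd (k := k) p = extS (ph234 k) (stackSetoid p c) from ht.symm,
      nc_extS _ _ (ph234_inj k), cardUk, cardTk]
    omega
  have h2 : nc (CpUd c' ⊔ CUd (k := k) c) = nc (stackSetoid c c') + k := by
    have ht := stack_transport c c' (ch123 k) (ch123_inj k)
    rw [ch_up, ch_down] at ht
    rw [show CpUd c' ⊔ CUd (k := k) c = extS (ch123 k) (stackSetoid c c') from ht.symm,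
      nc_extS _ _ (ch123_inj k), cardUk, cardTk]
    omega
  have h3 : nc (CpUd c' ⊔ PpUd p c) = nc (stackSetoid (comp p c) c') + k := by
    have ht := stack_transport (comp p c) c' (th124 k) (th124_inj k)
    rw [th_up, th_down] at ht
    rw [show CpUd c' ⊔ PpUd p c = extS (th124 k) (stackSetoid (comp p c) c') from ht.symm,
      nc_extS _ _ (th124_inj k), cardUk, cardTk]
    omega
  have hm1 : nc (CUd c ⊔ PUd (k := k) p) = nc (comp p c) +
      Nat.card {c0 : Quotient (CUd c ⊔ PUd (k := k) p) //
        ∀ x, Quotient.mk (CUd c ⊔ PUd (k := k) p) x = c0 → x ∉ Set.range (r24 k)} := by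
    have := nc_comap_add_card (r24 k) (CUd c ⊔ PUd (k := k) p)
    rwa [← hp'comap p c] at this
  have hm2 : nc (CpUd c' ⊔ CUd (k := k) c) = nc (comp c c') +
      Nat.card {c0 : Quotient (CpUd c' ⊔ CUd (k := k) c) //
        ∀ x, Quotient.mk (CpUd c' ⊔ CUd (k := k) c) x = c0 → x ∉ Set.range (e13 k)} := by
    have := nc_comap_add_card (e13 k) (CpUd c' ⊔ CUd (k := k) c)
    rwa [← he_comap c c'] at this
  have hm3 : nc (JUd p c c') = nc (Setoid.comap (ps134 k) (JUd p c c')) +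
      Nat.card {c0 : Quotient (JUd p c c') //
        ∀ x, Quotient.mk (JUd p c c') x = c0 → x ∉ Set.range (ps134 k)} :=
    nc_comap_add_card (ps134 k) (JUd p c c')
  have hst : stackSetoid p (comp c c') ≤ Setoid.comap (ps134 k) (JUd p c c') := by
    apply sInf_le
    rintro x y (⟨a, b, rfl, rfl, h⟩ | ⟨a, b, rfl, rfl, h⟩)
    · refine (Setoid.comap_rel _ _ _ _).mpr ?_
      have hup : ∀ z, ps134 k (upMap k z) = e13 k z := fun z => congrFun (ps_up k) z
      rw [hup, hup]
      have h2 : (comp c c') a b := h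
      rw [he_comap c c'] at h2
      exact (le_sup_left : CpUd c' ⊔ CUd c ≤ JUd p c c')
        ((Setoid.comap_rel _ _ _ _).mp h2)
    · refine (Setoid.comap_rel _ _ _ _).mpr ?_
      have hdn : ∀ z, ps134 k (downMap k z) = g34 k z := fun z => congrFun (ps_down k) z
      rw [hdn, hdn]
      exact (le_sup_right : PUd p ≤ JUd p c c') (extS_rel h)
  have hstn : nc (Setoid.comap (ps134 k) (JUd p c c')) ≤ nc (stackSetoid p (comp c c')) :=
    nc_mono hst
  have hsub : nc (PpUd p c ⊔ CpUd c') + nc (PpUd p c ⊔ (CUd c ⊔ PUd p)) ≤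
      nc (PpUd p c) + nc (PpUd p c ⊔ CpUd c' ⊔ (CUd c ⊔ PUd p)) :=
    nc_submod _ _ _
  have heq1 : PpUd p c ⊔ (CUd c ⊔ PUd (k := k) p) = CUd c ⊔ PUd p :=
    sup_eq_right.mpr (hP'le p c)
  have hCPJ : CUd c ⊔ PUd (k := k) p ≤ JUd p c c' := CP_le_J p c c'
  have heq2 : PpUd p c ⊔ CpUd c' ⊔ (CUd c ⊔ PUd (k := k) p) = JUd p c c' := by
    apply le_antisymm
    · apply sup_le (sup_le ((hP'le p c).trans hCPJ) (le_sup_left.trans le_sup_left)) hCPJ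
    · rw [JUd]
      apply sup_le (sup_le ?_ ?_) ?_
      · exact (le_sup_right : CpUd c' ≤ PpUd p c ⊔ CpUd c').trans le_sup_left
      · exact (le_sup_left : CUd c ≤ CUd c ⊔ PUd p).trans le_sup_right
      · exact (le_sup_right : PUd p ≤ CUd c ⊔ PUd p).trans le_sup_right
  have hcomm : nc (PpUd p c ⊔ CpUd c') = nc (CpUd c' ⊔ PpUd p c) := nc_sup_comm _ _
  have hPp : nc (PpUd p c) = nc (comp p c) + 2 * k := by
    rw [PpUd, nc_extS _ _ (r24_inj k), cardUk, card2k]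
    omega
  have hmq := m_ineq p c c'
  rw [heq1, heq2] at hsub
  rw [hcomm, h3] at hsub
  push_cast
  omega

lemma eta_zero_int {p q : Pk k} (h : eta p q = 0) :
    (nc p : ℤ) + nc q + nc (idk k ⊔ comp p q)
      = nc (stackSetoid p q) + nc (idk k ⊔ p) + nc (idk k ⊔ q) := by
  have h2 := eta_eq p q
  rw [h] at h2
  have h3 : (((nc p : ℤ) + nc q + nc (idk k ⊔ comp p q))
      - ((nc (stackSetoid p q) : ℤ) + nc (idk k ⊔ p) + nc (idk k ⊔ q)) : ℤ) = 0 := by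
    exact_mod_cast h2.symm
  omega

lemma eta_zero_of_int {p q : Pk k}
    (h : (nc p : ℤ) + nc q + nc (idk k ⊔ comp p q)
      = nc (stackSetoid p q) + nc (idk k ⊔ p) + nc (idk k ⊔ q)) : eta p q = 0 := by
  rw [eta_eq]
  have h3 : (((nc p : ℤ) + nc q + nc (idk k ⊔ comp p q))
      - ((nc (stackSetoid p q) : ℤ) + nc (idk k ⊔ p) + nc (idk k ⊔ q)) : ℤ) = 0 := by omega
  rw [h3]
  norm_num

lemma prec_trans {p p' p'' : Pk k} (h1 : prec p p') (h2 : prec p' p'') : prec p p'' := by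
  obtain ⟨cc, hc1, he1⟩ := h1
  obtain ⟨cc', hc2, he2⟩ := h2
  subst hc1
  subst hc2
  refine ⟨comp cc cc', comp_assoc' p cc cc', ?_⟩
  have hz1 := eta_zero_int he1
  have hz2 := eta_zero_int he2
  have hB := F_nonneg cc cc'
  have hC := F_nonneg p (comp cc cc')
  have hD := cocycle p cc cc'
  apply eta_zero_of_int
  have hassoc : nc (idk k ⊔ comp p (comp cc cc')) = nc (idk k ⊔ comp (comp p cc) cc') := by
    rw [comp_assoc']
  omega


end Statement18Aux

/-- The relation `≺` (admissible prefix) is a partial order on `P_k`: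
reflexive, antisymmetric and transitive; moreover `p' ≺ p` implies `p' ≤ p` for the
geodesic order. -/
theorem statement18 (k : ℕ) (hk : 0 < k) :
    (∀ p : Pk k, prec p p) ∧
    (∀ p p' : Pk k, prec p' p → prec p p' → p = p') ∧
    (∀ p p' p'' : Pk k, prec p p' → prec p' p'' → prec p p'') ∧
    (∀ p p' : Pk k, prec p' p → geoLE (idk k) p' p) :=
  ⟨fun p => prec_refl p, fun p p' h1 h2 => prec_antisymm h1 h2,
    fun p p' p'' h1 h2 => prec_trans h1 h2, fun p p' h => geo_of_prec p' p h⟩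

end PartitionPaper
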